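/- Let n ≥ 5 and 0 < s < 2. With U₁ the standard Hardy-Sobolev bubble U₁(X) = κ_{n,s}(1+|X|^{2-s})^{-(n-2)/(2-s)}, κ_{n,s} = ((n-s)(n-2))^{(n-2)/(2(2-s))}, and 2⋆(s) = 2(n-s)/(n-2), one has the identity ∫_{ℝⁿ}|X|²|∇U₁|² dX / ∫_{ℝⁿ}U₁² dX − (2/2⋆(s)) ∫_{ℝⁿ}|X|^{2-s}U₁^{2⋆(s)} dX / ∫_{ℝⁿ}U₁² dX = 6n·c_{n,s}, where c_{n,s} = (n-2)(6-s)/(12(2n-2-s)). -/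

import Mathlib

open MeasureTheory

open Set Real Filter InnerProductSpace
open scoped ENNReal

noncomputable def Jint (t a b : ℝ) : ℝ :=
  ∫ r in Ioi (0:ℝ), r ^ (a - 1) * (1 + r ^ t) ^ (-b)

lemma meas_aux (t a b : ℝ) :
    Measurable (fun r : ℝ => r ^ (a - 1) * (1 + r ^ t) ^ (-b)) := by
  fun_prop

lemma integrableJ {t a b : ℝ} (ht : 0 < t) (ha : 0 < a) (hab : a < b * t) :
    IntegrableOn (fun r : ℝ => r ^ (a - 1) * (1 + r ^ t) ^ (-b)) (Ioi 0) := by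
  have hb : 0 < b := by
    by_contra h
    push_neg at h
    nlinarith
  have hmeas := meas_aux t a b
  rw [show Ioi (0:ℝ) = Ioc 0 1 ∪ Ioi 1 by
    rw [Ioc_union_Ioi_eq_Ioi]; norm_num]
  refine IntegrableOn.union ?_ ?_
  · have hg : IntegrableOn (fun r : ℝ => r ^ (a - 1)) (Ioc 0 1) := by
      exact (intervalIntegral.intervalIntegrable_rpow' (a := 0) (b := 1) (r := a - 1) (by linarith)).1
    refine hg.mono' hmeas.aestronglyMeasurable.restrict ?_
    filter_upwards [ae_restrict_mem measurableSet_Ioc] with r hr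
    have hr0 : 0 < r := hr.1
    have h1 : (0:ℝ) ≤ r ^ (a-1) := rpow_nonneg hr0.le _
    have h2 : (1 + r ^ t) ^ (-b) ≤ 1 :=
      Real.rpow_le_one_of_one_le_of_nonpos
        (by nlinarith [rpow_nonneg hr0.le t]) (by linarith)
    have h3 : (0:ℝ) < (1 + r ^ t) ^ (-b) :=
      rpow_pos_of_pos (by nlinarith [rpow_nonneg hr0.le t]) _
    simp only [Real.norm_eq_abs]
    rw [abs_of_nonneg (by positivity)]
    nlinarith
  · have hg : IntegrableOn (fun r : ℝ => r ^ (a - 1 - t * b)) (Ioi 1) :=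
      integrableOn_Ioi_rpow_of_lt (by nlinarith) one_pos
    refine hg.mono' hmeas.aestronglyMeasurable.restrict ?_
    filter_upwards [ae_restrict_mem measurableSet_Ioi] with r hr
    have hr0 : (0:ℝ) < r := lt_trans one_pos hr
    have hrt : (0:ℝ) < r ^ t := rpow_pos_of_pos hr0 _
    have h2 : (1 + r ^ t) ^ (-b) ≤ (r ^ t) ^ (-b) :=
      Real.rpow_le_rpow_of_nonpos hrt (by linarith) (by linarith)
    have h3 : (r ^ t) ^ (-b) = r ^ (t * (-b)) := (Real.rpow_mul hr0.le _ _).symm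
    have h1 : (0:ℝ) ≤ r ^ (a-1) := rpow_nonneg hr0.le _
    have h4 : (0:ℝ) < (1 + r ^ t) ^ (-b) := rpow_pos_of_pos (by linarith) _
    simp only [Real.norm_eq_abs]
    rw [abs_of_nonneg (by positivity)]
    calc r ^ (a-1) * (1 + r ^ t) ^ (-b) ≤ r ^ (a-1) * r ^ (t * (-b)) := by
          rw [← h3]; nlinarith
      _ = r ^ (a - 1 - t * b) := by
          rw [← Real.rpow_add hr0]; ring_nf

lemma Jpos {t a b : ℝ} (ht : 0 < t) (ha : 0 < a) (hab : a < b * t) :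
    0 < Jint t a b := by
  rw [Jint, setIntegral_pos_iff_support_of_nonneg_ae]
  · have : Ioi (0:ℝ) ⊆ Function.support fun r : ℝ => r ^ (a - 1) * (1 + r ^ t) ^ (-b) := by
      intro r hr
      have hr0 : (0:ℝ) < r := hr
      have : (0:ℝ) < r ^ (a-1) * (1 + r ^ t) ^ (-b) := by
        have := rpow_pos_of_pos hr0 (a-1)
        have h4 : (0:ℝ) < (1 + r ^ t) ^ (-b) :=
          rpow_pos_of_pos (by nlinarith [rpow_pos_of_pos hr0 t]) _
        positivity
      exact ne_of_gt this
    calc (0:ℝ≥0∞) < volume (Ioi (0:ℝ)) := by simp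
      _ ≤ _ := measure_mono (subset_inter this subset_rfl)
  · filter_upwards [ae_restrict_mem measurableSet_Ioi] with r hr
    have hr0 : (0:ℝ) < r := hr
    have h4 : (0:ℝ) < (1 + r ^ t) ^ (-b) :=
      rpow_pos_of_pos (by nlinarith [rpow_pos_of_pos hr0 t]) _
    positivity
  · exact integrableJ ht ha hab

lemma Jrec {t a b : ℝ} (ht : 0 < t) (ha : 0 < a) (hab : a < b * t) :
    a * Jint t a b = b * t * Jint t (a + t) (b + 1) := by
  set F : ℝ → ℝ := fun r => r ^ a * (1 + r ^ t) ^ (-b) with hF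
  set f' : ℝ → ℝ := fun r =>
    a * (r ^ (a - 1) * (1 + r ^ t) ^ (-b))
      - b * t * (r ^ (a + t - 1) * (1 + r ^ t) ^ (-(b + 1))) with hf'
  have hint1 := integrableJ ht ha hab
  have hint2 : IntegrableOn (fun r : ℝ => r ^ (a + t - 1) * (1 + r ^ t) ^ (-(b+1))) (Set.Ioi 0) :=
    integrableJ ht (by linarith) (by nlinarith)
  have key : ∫ r in Ioi (0:ℝ), f' r = 0 - F 0 := by
    apply integral_Ioi_of_hasDerivAt_of_tendsto
    · apply ContinuousAt.continuousWithinAt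
      apply ContinuousAt.mul
      · exact Real.continuousAt_rpow_const 0 a (Or.inr ha.le)
      · apply ContinuousAt.rpow_const
        · exact (Real.continuousAt_rpow_const 0 t (Or.inr ht.le)).const_add 1
        · left
          rw [Real.zero_rpow ht.ne']
          norm_num
    · intro r hr
      have hr0 : (0:ℝ) < r := hr
      have hbase : (0:ℝ) < 1 + r ^ t := by nlinarith [rpow_pos_of_pos hr0 t]
      have d1 : HasDerivAt (fun r : ℝ => r ^ a) (a * r ^ (a - 1)) r :=
        Real.hasDerivAt_rpow_const (Or.inl hr0.ne')
      have dinner : HasDerivAt (fun r : ℝ => 1 + r ^ t) (t * r ^ (t - 1)) r := by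
        simpa using (Real.hasDerivAt_rpow_const (p := t) (Or.inl hr0.ne')).const_add 1
      have douter : HasDerivAt (fun v : ℝ => v ^ (-b)) (-b * (1 + r ^ t) ^ (-b - 1)) (1 + r ^ t) :=
        Real.hasDerivAt_rpow_const (Or.inl hbase.ne')
      have d2 := douter.comp r dinner
      have dF := d1.mul d2
      refine dF.congr_deriv ?_; symm
      have e1 : r ^ a * r ^ (t - 1) = r ^ (a + t - 1) := by
        rw [← Real.rpow_add hr0]; ring_nf
      have e2 : (-(b+1)) = -b - 1 := by ring
      simp only [hf', Function.comp_def, e2]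
      have e3 : r ^ a * ((-b) * (1 + r ^ t) ^ (-b - 1) * (t * r ^ (t-1)))
          = - (b * t * (r ^ a * r ^ (t-1) * (1 + r ^ t) ^ (-b - 1))) := by ring
      have e4 : a * (r ^ (a-1) * (1 + r ^ t) ^ (-b)) = a * r ^ (a-1) * (1 + r ^ t) ^ (-b) := by
        ring
      rw [e4, e3, e1]
      ring
    · exact (hint1.const_mul a).sub (hint2.const_mul (b * t))
    · have hb : 0 < b := by by_contra h; push_neg at h; nlinarith
      apply squeeze_zero' (g := fun r : ℝ => r ^ (a - t * b))
      · filter_upwards [Filter.eventually_gt_atTop 0] with r hr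
        have hbase : (0:ℝ) < 1 + r ^ t := by nlinarith [rpow_pos_of_pos hr t]
        positivity
      · filter_upwards [Filter.eventually_gt_atTop 0] with r hr
        have hrt : (0:ℝ) < r ^ t := rpow_pos_of_pos hr _
        have h2 : (1 + r ^ t) ^ (-b) ≤ (r ^ t) ^ (-b) :=
          Real.rpow_le_rpow_of_nonpos hrt (by linarith) (by linarith)
        have h3 : (r ^ t) ^ (-b) = r ^ (t * (-b)) := (Real.rpow_mul hr.le _ _).symm
        calc r ^ a * (1 + r ^ t) ^ (-b) ≤ r ^ a * r ^ (t * (-b)) := by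
              rw [← h3]
              have := rpow_nonneg hr.le a
              nlinarith
          _ = r ^ (a - t * b) := by rw [← Real.rpow_add hr]; ring_nf
      · have : Filter.Tendsto (fun r : ℝ => r ^ (-(t * b - a))) atTop (nhds 0) :=
          tendsto_rpow_neg_atTop (by nlinarith)
        convert this using 2 with r
        ring_nf
  have hF0 : F 0 = 0 := by
    simp only [hF]
    rw [Real.zero_rpow ha.ne']
    ring
  rw [hF0, sub_zero] at key
  have expand : ∫ r in Ioi (0:ℝ), f' r
      = a * Jint t a b - b * t * Jint t (a + t) (b + 1) := by
    rw [hf', Jint, Jint]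
    rw [integral_sub (hint1.const_mul a) (hint2.const_mul (b*t)),
      MeasureTheory.integral_const_mul, MeasureTheory.integral_const_mul]
  rw [expand] at key
  linarith

lemma Jsplit {t a b : ℝ} (ht : 0 < t) (ha : 0 < a) (hab : a < b * t) :
    Jint t a b = Jint t a (b + 1) + Jint t (a + t) (b + 1) := by
  have hint1 : IntegrableOn (fun r : ℝ => r ^ (a - 1) * (1 + r ^ t) ^ (-(b+1))) (Set.Ioi 0) :=
    integrableJ ht ha (by nlinarith)
  have hint2 : IntegrableOn (fun r : ℝ => r ^ (a + t - 1) * (1 + r ^ t) ^ (-(b+1))) (Set.Ioi 0) :=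
    integrableJ ht (by linarith) (by nlinarith)
  rw [Jint, Jint, Jint, ← integral_add hint1 hint2]
  apply setIntegral_congr_fun measurableSet_Ioi
  intro r hr
  have hr0 : (0:ℝ) < r := hr
  have hbase : (0:ℝ) < 1 + r ^ t := by nlinarith [rpow_pos_of_pos hr0 t]
  have h1 : (1 + r ^ t) ^ (-b) = (1 + r ^ t) ^ (-(b+1)) * (1 + r ^ t) := by
    rw [← Real.rpow_add_one hbase.ne']
    ring_nf
  have h2 : r ^ (a + t - 1) = r ^ (a - 1) * r ^ t := by
    rw [← Real.rpow_add hr0]; ring_nf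
  simp only []
  rw [h1, h2]
  ring

lemma inner_to_J (n : ℕ) (hn : 1 ≤ n) (C t q b : ℝ) :
    (∫ y in Ioi (0:ℝ), y ^ (n - 1 : ℕ) * (C * (y ^ q * (1 + y ^ t) ^ (-b))))
      = C * Jint t ((n:ℝ) + q) b := by
  rw [Jint, ← MeasureTheory.integral_const_mul]
  apply setIntegral_congr_fun measurableSet_Ioi
  intro y hy
  have hy0 : (0:ℝ) < y := hy
  have h1 : y ^ (n-1:ℕ) = y ^ ((n:ℝ) - 1) := by
    rw [← Real.rpow_natCast y (n-1), Nat.cast_sub hn, Nat.cast_one]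
  simp only []
  rw [h1, show (n:ℝ) + q - 1 = ((n:ℝ) - 1) + q by ring, Real.rpow_add hy0]
  ring

noncomputable def kappa (n : ℕ) (s : ℝ) : ℝ :=
  (((n : ℝ) - s) * ((n : ℝ) - 2)) ^ (((n : ℝ) - 2) / (2 * (2 - s)))

noncomputable def U1 (n : ℕ) (s : ℝ) (X : EuclideanSpace ℝ (Fin n)) : ℝ :=
  kappa n s * (1 + ‖X‖ ^ (2 - s)) ^ (-(((n : ℝ) - 2) / (2 - s)))

noncomputable def critExp (n : ℕ) (s : ℝ) : ℝ := 2 * ((n : ℝ) - s) / ((n : ℝ) - 2)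

lemma U1_hasGradient (n : ℕ) (s : ℝ) (hs2 : s < 2)
    (X : EuclideanSpace ℝ (Fin n)) (hX : X ≠ 0) :
    HasGradientAt (U1 n s)
      ((-(kappa n s * (((n:ℝ)-2)/(2-s)) * (2-s) * ‖X‖ ^ ((2-s) - 2) *
        (1 + ‖X‖ ^ (2-s)) ^ (-((((n:ℝ)-2)/(2-s)) + 1)))) • X) X := by
  set t : ℝ := 2 - s with htdef
  have ht : 0 < t := by simp [htdef]; linarith
  set m : ℝ := ((n:ℝ)-2)/t with hmdef
  set κ : ℝ := kappa n s with hκdef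
  have hXn : (0:ℝ) < ‖X‖ := norm_pos_iff.mpr hX
  set u : ℝ := ‖X‖ ^ (2:ℕ) with hudef
  have hu : 0 < u := by positivity
  have hut : u ^ (t/2) = ‖X‖ ^ t := by
    rw [hudef, ← Real.rpow_natCast ‖X‖ 2, ← Real.rpow_mul (norm_nonneg X)]
    push_cast
    congr 1
    ring
  have hbase : (0:ℝ) < 1 + ‖X‖ ^ t := by positivity
  have hbase' : (0:ℝ) < 1 + u ^ (t/2) := by rw [hut]; exact hbase
  have d_inner : HasDerivAt (fun v : ℝ => 1 + v ^ (t/2)) ((t/2) * u ^ (t/2 - 1)) u := by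
    simpa using (Real.hasDerivAt_rpow_const (x := u) (p := t/2) (Or.inl hu.ne')).const_add 1
  have d_outer : HasDerivAt (fun v : ℝ => v ^ (-m)) (-m * (1 + u ^ (t/2)) ^ (-m - 1))
      (1 + u ^ (t/2)) := Real.hasDerivAt_rpow_const (Or.inl hbase'.ne')
  have dh : HasDerivAt (fun v : ℝ => κ * (1 + v ^ (t/2)) ^ (-m))
      (κ * (-m * (1 + u ^ (t/2)) ^ (-m - 1) * ((t/2) * u ^ (t/2 - 1)))) u := by
    exact ((d_outer.comp u d_inner)).const_mul κ
  have dsq : HasFDerivAt (fun x : EuclideanSpace ℝ (Fin n) => ‖x‖ ^ (2:ℕ))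
      ((2:ℕ) • (innerSL ℝ X)) X := (hasStrictFDerivAt_norm_sq X).hasFDerivAt
  have dU : HasFDerivAt (U1 n s)
      ((κ * (-m * (1 + u ^ (t/2)) ^ (-m - 1) * ((t/2) * u ^ (t/2 - 1)))) •
        ((2:ℕ) • (innerSL ℝ X))) X := by
    have comp := dh.comp_hasFDerivAt X dsq
    have funeq : (fun v : ℝ => κ * (1 + v ^ (t/2)) ^ (-m)) ∘
        (fun x : EuclideanSpace ℝ (Fin n) => ‖x‖ ^ (2:ℕ)) = U1 n s := by
      funext x
      simp only [Function.comp_apply, U1]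
      rw [← Real.rpow_natCast ‖x‖ 2, ← Real.rpow_mul (norm_nonneg x)]
      push_cast
      rw [show (2:ℝ) * (t/2) = 2 - s by rw [htdef]; ring, hκdef, hmdef, htdef]
    rwa [funeq] at comp
  rw [hasGradientAt_iff_hasFDerivAt]
  refine dU.congr_fderiv ?_; symm
  ext y
  rw [toDual_apply_apply]
  rw [real_inner_smul_left]
  simp only [ContinuousLinearMap.coe_smul', Pi.smul_apply, innerSL_apply_apply, smul_eq_mul]
  rw [nsmul_eq_mul]
  have hu2 : u ^ (t/2 - 1) = ‖X‖ ^ (t - 2) := by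
    rw [hudef, ← Real.rpow_natCast ‖X‖ 2, ← Real.rpow_mul (norm_nonneg X)]
    push_cast
    congr 1
    ring
  rw [hu2, hut, show -m - 1 = -(m+1) by ring]
  push_cast
  ring

lemma U1_grad_norm (n : ℕ) (hn : 3 ≤ n) (s : ℝ) (hs0 : 0 < s) (hs2 : s < 2)
    (X : EuclideanSpace ℝ (Fin n)) (hX : X ≠ 0) :
    ‖gradient (U1 n s) X‖ = kappa n s * (((n:ℝ)-2)/(2-s)) * (2-s) * ‖X‖ ^ ((2-s) - 2) *
        (1 + ‖X‖ ^ (2-s)) ^ (-((((n:ℝ)-2)/(2-s)) + 1)) * ‖X‖ := by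
  have hn3 : (3:ℝ) ≤ (n:ℝ) := by exact_mod_cast hn
  have hκ : 0 < kappa n s := by
    rw [kappa]; apply rpow_pos_of_pos; nlinarith
  have hm : 0 ≤ ((n:ℝ)-2)/(2-s) := by
    apply div_nonneg <;> linarith
  rw [(U1_hasGradient n s hs2 X hX).gradient, norm_smul, Real.norm_eq_abs, abs_neg,
    abs_of_nonneg]
  apply mul_nonneg
  apply mul_nonneg
  apply mul_nonneg
  apply mul_nonneg hκ.le hm
  · linarith
  · exact rpow_nonneg (norm_nonneg X) _
  · exact rpow_nonneg (by positivity) _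

set_option maxHeartbeats 1000000 in
theorem stmt_6 (n : ℕ) (hn : 5 ≤ n) (s : ℝ) (hs0 : 0 < s) (hs2 : s < 2) :
    (∫ X : EuclideanSpace ℝ (Fin n), ‖X‖ ^ 2 * ‖gradient (U1 n s) X‖ ^ 2) /
          (∫ X : EuclideanSpace ℝ (Fin n), (U1 n s X) ^ 2) -
        (2 / critExp n s) *
          ((∫ X : EuclideanSpace ℝ (Fin n), ‖X‖ ^ (2 - s) * (U1 n s X) ^ (critExp n s)) /
            (∫ X : EuclideanSpace ℝ (Fin n), (U1 n s X) ^ 2)) =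
      6 * (n : ℝ) * (((n : ℝ) - 2) * (6 - s) / (12 * (2 * (n : ℝ) - 2 - s))) := by
  have hn3 : 3 ≤ n := by omega
  have hN5 : (5:ℝ) ≤ (n:ℝ) := by exact_mod_cast hn
  set N : ℝ := (n:ℝ) with hNdef
  set t : ℝ := 2 - s with htdef
  have ht : 0 < t := by rw [htdef]; linarith
  set m : ℝ := (N - 2)/t with hmdef
  have hm : 0 < m := by rw [hmdef]; apply div_pos <;> linarith
  have hmt : m * t = N - 2 := by rw [hmdef]; field_simp
  set κ : ℝ := kappa n s with hκdef
  have hκ : 0 < κ := by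
    rw [hκdef, kappa]; apply rpow_pos_of_pos; nlinarith
  set p : ℝ := critExp n s with hpdef
  have hp : p = 2 * (N - s) / (N - 2) := by rw [hpdef, critExp]
  have hppos : 0 < p := by rw [hp]; apply div_pos <;> linarith
  haveI : Nontrivial (EuclideanSpace ℝ (Fin n)) :=
    Module.nontrivial_of_finrank_pos (R := ℝ)
      (by rw [finrank_euclideanSpace_fin]; omega)
  have hfr : Module.finrank ℝ (EuclideanSpace ℝ (Fin n)) = n := finrank_euclideanSpace_fin
  set c : ℝ := (n:ℝ) * (volume (Metric.ball (0 : EuclideanSpace ℝ (Fin n)) 1)).toReal with hcdef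
  have hc : 0 < c := by
    rw [hcdef]
    apply mul_pos (by positivity)
    exact ENNReal.toReal_pos (Metric.measure_ball_pos volume 0 one_pos).ne' measure_ball_lt_top.ne
  have polar : ∀ f : ℝ → ℝ, (∫ x : EuclideanSpace ℝ (Fin n), f ‖x‖)
      = c * ∫ y in Ioi (0:ℝ), y ^ (n - 1 : ℕ) * f y := by
    intro f
    rw [MeasureTheory.integral_fun_norm_addHaar volume f]
    simp only [hfr, nsmul_eq_mul, smul_eq_mul, hcdef]
    ring_nf
    rw [measureReal_def]; ring
  -- description of U1
  have hU1 : ∀ X : EuclideanSpace ℝ (Fin n), U1 n s X = κ * (1 + ‖X‖ ^ t) ^ (-m) := by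
    intro X
    rw [U1, ← hκdef, ← htdef, ← hNdef, ← hmdef]
  -- first integral : U1 squared
  have e1 : ∀ X : EuclideanSpace ℝ (Fin n),
      (U1 n s X) ^ 2 = κ^2 * (‖X‖ ^ (0:ℝ) * (1 + ‖X‖ ^ t) ^ (-(2*m))) := by
    intro X
    have hb : (0:ℝ) ≤ 1 + ‖X‖ ^ t := by positivity
    rw [hU1 X, mul_pow, Real.rpow_zero, ← Real.rpow_natCast ((1 + ‖X‖ ^ t) ^ (-m)) 2,
      ← Real.rpow_mul hb, one_mul,
      show (-m) * ((2:ℕ):ℝ) = -(2*m) by push_cast; ring]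
  have I1 : (∫ X : EuclideanSpace ℝ (Fin n), (U1 n s X) ^ 2)
      = c * (κ^2 * Jint t (N + 0) (2*m)) := by
    calc (∫ X : EuclideanSpace ℝ (Fin n), (U1 n s X) ^ 2)
        = ∫ X : EuclideanSpace ℝ (Fin n),
            (fun r : ℝ => κ^2 * (r ^ (0:ℝ) * (1 + r ^ t) ^ (-(2*m)))) ‖X‖ :=
          integral_congr_ae (Filter.Eventually.of_forall fun X => e1 X)
      _ = c * ∫ y in Ioi (0:ℝ), y ^ (n - 1 : ℕ)
            * (κ^2 * (y ^ (0:ℝ) * (1 + y ^ t) ^ (-(2*m)))) :=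
          polar (fun r : ℝ => κ^2 * (r ^ (0:ℝ) * (1 + r ^ t) ^ (-(2*m))))
      _ = c * (κ^2 * Jint t (N + 0) (2*m)) := by
          rw [inner_to_J n (by omega) (κ^2) t 0 (2*m)]
  -- second integral : weighted critical power
  have hmp : m * p = 2*m + 2 := by
    have h1 : (2:ℝ) - s ≠ 0 := by linarith
    have h2 : N - 2 ≠ 0 := by linarith
    rw [hp, hmdef, htdef]
    field_simp
    ring
  have e2 : ∀ X : EuclideanSpace ℝ (Fin n),
      ‖X‖ ^ t * (U1 n s X) ^ p = κ ^ p * (‖X‖ ^ t * (1 + ‖X‖ ^ t) ^ (-(2*m+2))) := by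
    intro X
    have hb : (0:ℝ) ≤ 1 + ‖X‖ ^ t := by positivity
    rw [hU1 X, Real.mul_rpow hκ.le (rpow_nonneg hb _), ← Real.rpow_mul hb,
      show -m * p = -(2*m+2) by rw [← hmp]; ring]
    ring
  have I2 : (∫ X : EuclideanSpace ℝ (Fin n), ‖X‖ ^ t * (U1 n s X) ^ p)
      = c * (κ^p * Jint t (N + t) (2*m+2)) := by
    calc (∫ X : EuclideanSpace ℝ (Fin n), ‖X‖ ^ t * (U1 n s X) ^ p)
        = ∫ X : EuclideanSpace ℝ (Fin n),
            (fun r : ℝ => κ^p * (r ^ t * (1 + r ^ t) ^ (-(2*m+2)))) ‖X‖ :=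
          integral_congr_ae (Filter.Eventually.of_forall fun X => e2 X)
      _ = c * ∫ y in Ioi (0:ℝ), y ^ (n - 1 : ℕ)
            * (κ^p * (y ^ t * (1 + y ^ t) ^ (-(2*m+2)))) :=
          polar (fun r : ℝ => κ^p * (r ^ t * (1 + r ^ t) ^ (-(2*m+2))))
      _ = c * (κ^p * Jint t (N + t) (2*m+2)) := by
          rw [inner_to_J n (by omega) (κ^p) t t (2*m+2)]
  -- third integral : gradient term
  have h0 : ∀ᵐ X : EuclideanSpace ℝ (Fin n) ∂volume, X ≠ 0 := by
    rw [ae_iff]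
    have : {X : EuclideanSpace ℝ (Fin n) | ¬ X ≠ 0} = {0} := by
      ext X; simp
    rw [this]
    exact measure_singleton 0
  have e3 : (fun X : EuclideanSpace ℝ (Fin n) => ‖X‖ ^ 2 * ‖gradient (U1 n s) X‖ ^ 2)
      =ᵐ[volume] fun X =>
        (fun r : ℝ => (κ*m*t)^2 * (r ^ (2*t) * (1 + r ^ t) ^ (-(2*m+2)))) ‖X‖ := by
    filter_upwards [h0] with X hX
    have hr : (0:ℝ) < ‖X‖ := norm_pos_iff.mpr hX
    have hb : (0:ℝ) < 1 + ‖X‖ ^ t := by positivity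
    rw [U1_grad_norm n hn3 s hs0 hs2 X hX, ← htdef, ← hNdef, ← hmdef, ← hκdef]
    have hB : ((1 + ‖X‖ ^ t) ^ (-(m+1))) ^ (2:ℕ) = (1 + ‖X‖ ^ t) ^ (-(2*m+2)) := by
      rw [← Real.rpow_natCast ((1 + ‖X‖ ^ t) ^ (-(m+1))) 2, ← Real.rpow_mul hb.le,
        show (-(m+1)) * ((2:ℕ):ℝ) = -(2*m+2) by push_cast; ring]
    have hA : ‖X‖ ^ (2:ℕ) * (‖X‖ ^ (t-2)) ^ (2:ℕ) * ‖X‖ ^ (2:ℕ) = ‖X‖ ^ (2*t) := by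
      rw [← Real.rpow_natCast ‖X‖ 2, ← Real.rpow_natCast (‖X‖ ^ (t-2)) 2,
        ← Real.rpow_mul hr.le, ← Real.rpow_add hr, ← Real.rpow_add hr,
        show ((2:ℕ):ℝ) + (t-2) * ((2:ℕ):ℝ) + ((2:ℕ):ℝ) = 2*t by push_cast; ring]
    have expand : ‖X‖ ^ (2:ℕ) * (κ * m * t * ‖X‖ ^ (t-2) * (1 + ‖X‖ ^ t) ^ (-(m+1)) * ‖X‖) ^ (2:ℕ)
        = (κ*m*t)^2 * ((‖X‖ ^ (2:ℕ) * (‖X‖ ^ (t-2)) ^ (2:ℕ) * ‖X‖ ^ (2:ℕ))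
            * ((1 + ‖X‖ ^ t) ^ (-(m+1))) ^ (2:ℕ)) := by
      have hn2 : ‖X‖ ^ (2:ℕ) = ‖X‖ * ‖X‖ := sq ‖X‖
      ring
    rw [expand, hA, hB]
  have I3 : (∫ X : EuclideanSpace ℝ (Fin n), ‖X‖ ^ 2 * ‖gradient (U1 n s) X‖ ^ 2)
      = c * ((κ*m*t)^2 * Jint t (N + 2*t) (2*m+2)) := by
    calc (∫ X : EuclideanSpace ℝ (Fin n), ‖X‖ ^ 2 * ‖gradient (U1 n s) X‖ ^ 2)
        = ∫ X : EuclideanSpace ℝ (Fin n),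
            (fun r : ℝ => (κ*m*t)^2 * (r ^ (2*t) * (1 + r ^ t) ^ (-(2*m+2)))) ‖X‖ :=
          integral_congr_ae e3
      _ = c * ∫ y in Ioi (0:ℝ), y ^ (n - 1 : ℕ)
            * ((κ*m*t)^2 * (y ^ (2*t) * (1 + y ^ t) ^ (-(2*m+2)))) :=
          polar (fun r : ℝ => (κ*m*t)^2 * (r ^ (2*t) * (1 + r ^ t) ^ (-(2*m+2))))
      _ = c * ((κ*m*t)^2 * Jint t (N + 2*t) (2*m+2)) := by
          rw [inner_to_J n (by omega) ((κ*m*t)^2) t (2*t) (2*m+2)]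
  -- J relations
  have hNpos : 0 < N := by linarith
  have hNlt : N < 2*m*t := by rw [mul_assoc, hmt]; linarith
  have hrec1 := Jrec ht hNpos (by linarith : N < (2*m) * t)
  have hrec2 := Jrec ht (by linarith : (0:ℝ) < N + t)
    (by rw [add_mul, one_mul, mul_assoc, hmt]; linarith : N + t < (2*m+1) * t)
  rw [show N + t + t = N + 2*t by ring, show 2*m+1+1 = 2*m+2 by ring] at hrec2
  have hsplit := Jsplit ht (by linarith : (0:ℝ) < N + t)
    (by rw [add_mul, one_mul, mul_assoc, hmt]; linarith : N + t < (2*m+1) * t)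
  rw [show N + t + t = N + 2*t by ring, show 2*m+1+1 = 2*m+2 by ring] at hsplit
  have hP : 0 < Jint t N (2*m) := Jpos ht hNpos (by linarith)
  have h2m1 : (0:ℝ) < 2*m+1 := by linarith
  have hQ'v : Jint t (N+t) (2*m+1) = N/(2*m*t) * Jint t N (2*m) := by
    field_simp
    linarith [hrec1]
  have hRv : Jint t (N+2*t) (2*m+2)
      = N*(N+t)/(2*m*(2*m+1)*t^2) * Jint t N (2*m) := by
    rw [hQ'v] at hrec2
    field_simp at hrec2 ⊢
    linarith [hrec2]
  have hQv : Jint t (N+t) (2*m+2)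
      = N*(2*m*t-N)/(2*m*(2*m+1)*t^2) * Jint t N (2*m) := by
    have h1 : Jint t (N+t) (2*m+2) = Jint t (N+t) (2*m+1) - Jint t (N+2*t) (2*m+2) := by
      linarith [hsplit]
    rw [h1, hQ'v, hRv]
    field_simp
    ring
  -- kappa power identity
  have hts : (2:ℝ) - s ≠ 0 := by linarith
  have hN2 : N - 2 ≠ 0 := by linarith
  have hNs : N - s ≠ 0 := by linarith
  have h2Ns : 2*N - 2 - s ≠ 0 := by nlinarith
  have hκp : κ ^ p = κ^2 * ((N - s) * (N - 2)) := by
    have h1 : κ ^ p = κ ^ ((2:ℝ) + (p - 2)) := by congr 1; ring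
    have h2 : κ ^ ((2:ℝ) + (p-2)) = κ ^ (2:ℝ) * κ ^ (p-2) := Real.rpow_add hκ _ _
    have h3 : κ ^ (2:ℝ) = κ ^ (2:ℕ) := by
      rw [← Real.rpow_natCast κ 2]; norm_num
    have hbase : (0:ℝ) < (N - s) * (N - 2) := by nlinarith
    have h4 : κ ^ (p-2) = (N - s) * (N - 2) := by
      rw [hκdef, kappa, ← hNdef, ← Real.rpow_mul hbase.le]
      rw [show (N - 2) / (2 * (2 - s)) * (p - 2) = 1 by
        rw [hp]; field_simp; ring]
      exact Real.rpow_one _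
    rw [h1, h2, h3, h4]
  -- final assembly
  rw [show N + 0 = N by ring] at I1
  have hterm1 : c * ((κ*m*t)^2 * Jint t (N + 2*t) (2*m+2)) / (c * (κ^2 * Jint t N (2*m)))
      = m^2*t^2 * (N*(N+t)/(2*m*(2*m+1)*t^2)) := by
    rw [hRv]
    field_simp
    ring
    rw [mul_comm m 2]; exact mul_inv_cancel₀ hP.ne'
  have hterm2 : c * (κ^p * Jint t (N + t) (2*m+2)) / (c * (κ^2 * Jint t N (2*m)))
      = (N-s)*(N-2) * (N*(2*m*t-N)/(2*m*(2*m+1)*t^2)) := by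
    rw [hκp, hQv]
    field_simp
  rw [I1, I2, I3, hterm1, hterm2]
  have h2p : 2/p = (N-2)/(N-s) := by
    rw [hp]
    field_simp
  have hDval : 2*m*(2*m+1)*t^2 = 2*(N-2)*(2*N-2-s) := by
    calc 2*m*(2*m+1)*t^2 = 2*(m*t)*(2*(m*t)+t) := by ring
      _ = 2*(N-2)*(2*(N-2)+t) := by rw [hmt]
      _ = 2*(N-2)*(2*N-2-s) := by rw [htdef]; ring
  have hNt : N + t = N + 2 - s := by rw [htdef]; ring
  have h24 : 2*m*t - N = N - 4 := by
    rw [show 2*m*t = 2*(m*t) from by ring, hmt]; ring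
  rw [h2p, hDval, hNt, h24, show m^2*t^2 = (m*t)^2 from by ring, hmt]
  field_simp
  ring
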